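/- Let X = (X_1,…,X_n) be self-adjoint elements of a tracial W*-probability space (M,τ), and for each j define Δ_j := ((τ ∘ ev_X) ⊗ id) ∘ ∂_j on ℂ⟨Z_1,…,Z_n⟩. If P has total degree d ≥ 1 and a_{i_1,…,i_d} Z_{i_1}⋯Z_{i_d} is a highest-degree monomial of P, then Δ_{i_d} ⋯ Δ_{i_1} P = a_{i_1,…,i_d} (a constant polynomial). -/

import Mathlib

open scoped TensorProduct InnerProductSpace

/-- `D` is the `j`-th noncommutative derivative on `ℂ⟨Z_1,…,Z_n⟩`. -/
def IsNCDerivative (n : ℕ) (j : Fin n)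
    (D : FreeAlgebra ℂ (Fin n) →ₗ[ℂ] FreeAlgebra ℂ (Fin n) ⊗[ℂ] FreeAlgebra ℂ (Fin n)) :
    Prop :=
  (∀ a b : FreeAlgebra ℂ (Fin n),
      D (a * b) = D a * (1 ⊗ₜ[ℂ] b) + (a ⊗ₜ[ℂ] 1) * D b) ∧
  (∀ i : Fin n,
      D (FreeAlgebra.ι ℂ i) = if i = j then (1 ⊗ₜ[ℂ] 1) else 0)

variable {H : Type*} [NormedAddCommGroup H] [InnerProductSpace ℂ H] [CompleteSpace H]

/-- `Δ_j := ((τ ∘ ev_X) ⊗ id) ∘ ∂_j : ℂ⟨Z_1,…,Z_n⟩ → ℂ⟨Z_1,…,Z_n⟩`,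
i.e. `τ ∘ ev_X` is applied to the left tensor leg of `∂_j P`. -/
noncomputable def Delta (n : ℕ) (τ : (H →L[ℂ] H) →ₗ[ℂ] ℂ) (X : Fin n → (H →L[ℂ] H))
    (D : ∀ _ : Fin n,
      FreeAlgebra ℂ (Fin n) →ₗ[ℂ] FreeAlgebra ℂ (Fin n) ⊗[ℂ] FreeAlgebra ℂ (Fin n))
    (j : Fin n) : FreeAlgebra ℂ (Fin n) →ₗ[ℂ] FreeAlgebra ℂ (Fin n) :=
  (TensorProduct.lid ℂ (FreeAlgebra ℂ (Fin n))).toLinearMap ∘ₗ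
    (TensorProduct.map (τ ∘ₗ (FreeAlgebra.lift ℂ X).toLinearMap) LinearMap.id) ∘ₗ D j

namespace Stmt6Aux

noncomputable abbrev eqv (n : ℕ) :=
  FreeAlgebra.equivMonoidAlgebraFreeMonoid (R := ℂ) (X := Fin n)

noncomputable def mon (n : ℕ) (u : List (Fin n)) : FreeAlgebra ℂ (Fin n) :=
  (u.map (FreeAlgebra.ι ℂ)).prod

lemma mon_nil (n : ℕ) : mon n [] = 1 := rfl

lemma mon_cons (n : ℕ) (i : Fin n) (u : List (Fin n)) :
    mon n (i :: u) = FreeAlgebra.ι ℂ i * mon n u := by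
  simp [mon]

lemma eqv_ι (n : ℕ) (i : Fin n) :
    eqv n (FreeAlgebra.ι ℂ i) = MonoidAlgebra.single (FreeMonoid.of i) 1 := by
  simp [eqv, FreeAlgebra.equivMonoidAlgebraFreeMonoid, MonoidAlgebra.of_apply]

lemma eqv_mon (n : ℕ) (u : List (Fin n)) :
    eqv n (mon n u) = MonoidAlgebra.single (FreeMonoid.ofList u) 1 := by
  induction u with
  | nil => simp [mon_nil, MonoidAlgebra.one_def]
  | cons i u ih =>
    rw [mon_cons, map_mul, ih, eqv_ι, MonoidAlgebra.single_mul_single, one_mul]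
    rfl

lemma eqv_symm_single (n : ℕ) (x : FreeMonoid (Fin n)) (c : ℂ) :
    (eqv n).symm (MonoidAlgebra.single x c) = c • mon n (FreeMonoid.toList x) := by
  have h1 : MonoidAlgebra.single x (1 : ℂ) = eqv n (mon n (FreeMonoid.toList x)) := by
    rw [eqv_mon, FreeMonoid.ofList_toList]
  have h2 : MonoidAlgebra.single x c
      = c • (MonoidAlgebra.single x 1 : MonoidAlgebra ℂ (FreeMonoid (Fin n))) := by
    rw [MonoidAlgebra.smul_single, smul_eq_mul, mul_one]
  rw [h2, map_smul, h1, (eqv n).symm_apply_apply]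

lemma symm_decomp (n : ℕ) (F : MonoidAlgebra ℂ (FreeMonoid (Fin n))) :
    (eqv n).symm F = ∑ u ∈ F.coeff.support, F.coeff u • mon n (FreeMonoid.toList u) := by
  conv_lhs => rw [← MonoidAlgebra.sum_coeff_single F]
  rw [map_finsuppSum, Finsupp.sum]
  exact Finset.sum_congr rfl fun u _ => eqv_symm_single n u (F.coeff u)

lemma decomp (n : ℕ) (Q : FreeAlgebra ℂ (Fin n)) :
    Q = ∑ u ∈ (eqv n Q).coeff.support, (eqv n Q).coeff u • mon n (FreeMonoid.toList u) := by
  conv_lhs => rw [← (eqv n).symm_apply_apply Q]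
  exact symm_decomp n (eqv n Q)

variable (n : ℕ) (τ : (H →L[ℂ] H) →ₗ[ℂ] ℂ) (X : Fin n → (H →L[ℂ] H))
    (D : ∀ _ : Fin n,
      FreeAlgebra ℂ (Fin n) →ₗ[ℂ] FreeAlgebra ℂ (Fin n) ⊗[ℂ] FreeAlgebra ℂ (Fin n))

noncomputable def Lc (c : H →L[ℂ] H) (j : Fin n) :
    FreeAlgebra ℂ (Fin n) →ₗ[ℂ] FreeAlgebra ℂ (Fin n) :=
  (TensorProduct.lid ℂ (FreeAlgebra ℂ (Fin n))).toLinearMap ∘ₗ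
    (TensorProduct.map (τ ∘ₗ LinearMap.mulLeft ℂ c ∘ₗ (FreeAlgebra.lift ℂ X).toLinearMap)
      LinearMap.id) ∘ₗ D j

lemma Lc_one (j : Fin n) : Lc n τ X D 1 j = Delta n τ X D j := by
  unfold Lc Delta
  rw [LinearMap.mulLeft_one, LinearMap.id_comp]

lemma D_one (j : Fin n) (hD : IsNCDerivative n j (D j)) : D j 1 = 0 := by
  have h := hD.1 1 1
  rw [mul_one, ← Algebra.TensorProduct.one_def, mul_one, one_mul] at h
  exact (left_eq_add.mp h)

lemma Lc_mul_left (c : H →L[ℂ] H) (j i : Fin n) (hD : IsNCDerivative n j (D j))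
    (Q : FreeAlgebra ℂ (Fin n)) :
    Lc n τ X D c j (FreeAlgebra.ι ℂ i * Q) =
      (if i = j then τ c • Q else 0) + Lc n τ X D (c * X i) j Q := by
  unfold Lc
  simp only [LinearMap.coe_comp, Function.comp_apply, LinearEquiv.coe_coe]
  rw [hD.1 (FreeAlgebra.ι ℂ i) Q, map_add, map_add, hD.2 i]
  congr 1
  · by_cases h : i = j
    · rw [if_pos h, if_pos h, Algebra.TensorProduct.tmul_mul_tmul, one_mul, one_mul,
        TensorProduct.map_tmul]
      simp [TensorProduct.lid_tmul]
    · rw [if_neg h, if_neg h, zero_mul]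
      simp
  · induction D j Q using TensorProduct.induction_on with
    | zero => simp
    | tmul a b =>
      rw [Algebra.TensorProduct.tmul_mul_tmul, one_mul]
      rw [TensorProduct.map_tmul, TensorProduct.map_tmul]
      simp only [LinearMap.coe_comp, Function.comp_apply, LinearMap.mulLeft_apply,
        LinearMap.id_coe, id_eq, AlgHom.toLinearMap_apply, map_mul,
        FreeAlgebra.lift_ι_apply, TensorProduct.lid_tmul]
      rw [mul_assoc]
    | add s t hs ht =>
      rw [mul_add, map_add, map_add, hs, ht, map_add, map_add]

lemma Lc_mon_cons (c : H →L[ℂ] H) (j i : Fin n) (hD : IsNCDerivative n j (D j))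
    (u : List (Fin n)) :
    Lc n τ X D c j (mon n (i :: u)) =
      (if i = j then τ c • mon n u else 0) + Lc n τ X D (c * X i) j (mon n u) := by
  rw [mon_cons]; exact Lc_mul_left n τ X D c j i hD (mon n u)

lemma Lc_one_eq_zero (c : H →L[ℂ] H) (j : Fin n) (hD : IsNCDerivative n j (D j)) :
    Lc n τ X D c j 1 = 0 := by
  unfold Lc
  simp [D_one n D j hD]

lemma Lc_mon_coeff_zero (j : Fin n) (hD : IsNCDerivative n j (D j))
    (u : List (Fin n)) (c : H →L[ℂ] H) (x : FreeMonoid (Fin n))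
    (hx : u.length ≤ (FreeMonoid.toList x).length) :
    (eqv n (Lc n τ X D c j (mon n u))).coeff x = 0 := by
  induction u generalizing c with
  | nil =>
    rw [mon_nil, Lc_one_eq_zero n τ X D c j hD]
    simp
  | cons i u ih =>
    rw [Lc_mon_cons n τ X D c j i hD u, map_add, MonoidAlgebra.coeff_add, Finsupp.add_apply,
      ih (c * X i) (le_trans (Nat.le_succ _) hx)]
    by_cases h : i = j
    · rw [if_pos h, map_smul, eqv_mon, MonoidAlgebra.coeff_smul, Finsupp.smul_apply,
        MonoidAlgebra.coeff_single]
      have hne : FreeMonoid.ofList u ≠ x := by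
        intro he
        have : u.length = (FreeMonoid.toList x).length := by
          rw [← he]; simp
        simp only [List.length_cons] at hx
        omega
      rw [Finsupp.single_eq_of_ne' hne]
      simp
    · rw [if_neg h]; simp

lemma Lc_mon_coeff (j : Fin n) (hD : IsNCDerivative n j (D j))
    (v : List (Fin n)) (u : List (Fin n)) (c : H →L[ℂ] H)
    (hu : u.length ≤ v.length + 1) :
    (eqv n (Lc n τ X D c j (mon n u))).coeff (FreeMonoid.ofList v) =
      if u = j :: v then τ c else 0 := by
  induction u generalizing c with
  | nil =>
    rw [mon_nil, Lc_one_eq_zero n τ X D c j hD]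
    simp
  | cons i u ih =>
    rw [Lc_mon_cons n τ X D c j i hD u, map_add, MonoidAlgebra.coeff_add, Finsupp.add_apply,
      Lc_mon_coeff_zero n τ X D j hD u (c * X i) (FreeMonoid.ofList v)
        (by simp only [FreeMonoid.toList_ofList]
            simp only [List.length_cons] at hu
            omega),
      add_zero]
    by_cases h : i = j
    · rw [if_pos h, map_smul, eqv_mon, MonoidAlgebra.coeff_smul, Finsupp.smul_apply,
        MonoidAlgebra.coeff_single]
      by_cases huv : u = v
      · subst huv
        rw [Finsupp.single_eq_same]
        simp [h]
      · rw [Finsupp.single_eq_of_ne' (by simpa using huv)]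
        simp [huv]
    · rw [if_neg h]
      simp [h]


lemma coeff_Delta (hone : τ 1 = 1) (j : Fin n) (hD : IsNCDerivative n j (D j))
    (Q : FreeAlgebra ℂ (Fin n)) (x : FreeMonoid (Fin n)) :
    (eqv n (Delta n τ X D j Q)).coeff x =
      ∑ u ∈ (eqv n Q).coeff.support,
        (eqv n Q).coeff u * (eqv n (Lc n τ X D 1 j (mon n (FreeMonoid.toList u)))).coeff x := by
  rw [← Lc_one n τ X D j]
  conv_lhs => rw [decomp n Q]
  rw [map_sum, map_sum, MonoidAlgebra.coeff_sum, Finsupp.finset_sum_apply]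
  refine Finset.sum_congr rfl fun u _ => ?_
  rw [map_smul, map_smul, MonoidAlgebra.coeff_smul, Finsupp.smul_apply, smul_eq_mul]

lemma main (hone : τ 1 = 1) (hD : ∀ j, IsNCDerivative n j (D j)) :
    ∀ (v : List (Fin n)) (Q : FreeAlgebra ℂ (Fin n)),
    (∀ u ∈ (eqv n Q).coeff.support, (FreeMonoid.toList u).length ≤ v.length) →
    v.foldl (fun Q j => Delta n τ X D j Q) Q =
      algebraMap ℂ (FreeAlgebra ℂ (Fin n)) ((eqv n Q).coeff (FreeMonoid.ofList v)) := by
  classical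
  intro v
  induction v with
  | nil =>
    intro Q hQ
    have hQ1 : eqv n Q = MonoidAlgebra.single (1 : FreeMonoid (Fin n)) ((eqv n Q).coeff 1) := by
      ext x
      rw [MonoidAlgebra.coeff_single]
      by_cases hx : x = 1
      · subst hx; rw [Finsupp.single_eq_same]
      · rw [Finsupp.single_eq_of_ne' (Ne.symm hx)]
        by_contra hc
        have hmem := hQ x (Finsupp.mem_support_iff.2 hc)
        simp only [List.length_nil, Nat.le_zero, List.length_eq_zero_iff] at hmem
        apply hx
        have : FreeMonoid.toList x = FreeMonoid.toList (1 : FreeMonoid (Fin n)) := by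
          rw [hmem]; rfl
        exact FreeMonoid.toList.injective this
    have : Q = ((eqv n Q).coeff 1) • (1 : FreeAlgebra ℂ (Fin n)) := by
      conv_lhs => rw [← (eqv n).symm_apply_apply Q]
      conv_lhs => rw [hQ1]
      rw [eqv_symm_single n 1 ((eqv n Q).coeff 1),
        show FreeMonoid.toList (1 : FreeMonoid (Fin n)) = [] from rfl, mon_nil]
    rw [List.foldl_nil]
    conv_lhs => rw [this]
    rw [Algebra.algebraMap_eq_smul_one]
    rfl
  | cons j v ih =>
    intro Q hQ
    rw [List.foldl_cons]
    have hA : ∀ u ∈ (eqv n (Delta n τ X D j Q)).coeff.support,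
        (FreeMonoid.toList u).length ≤ v.length := by
      intro x hx
      by_contra hlen
      apply Finsupp.mem_support_iff.1 hx
      rw [coeff_Delta n τ X D hone j (hD j) Q x]
      refine Finset.sum_eq_zero fun u hu => ?_
      rw [Lc_mon_coeff_zero n τ X D j (hD j) (FreeMonoid.toList u) 1 x
        (by
          have h1 := hQ u hu
          simp only [List.length_cons] at h1
          omega), mul_zero]
    have hB : (eqv n (Delta n τ X D j Q)).coeff (FreeMonoid.ofList v) =
        (eqv n Q).coeff (FreeMonoid.ofList (j :: v)) := by
      rw [coeff_Delta n τ X D hone j (hD j) Q (FreeMonoid.ofList v)]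
      have step : ∀ u ∈ (eqv n Q).coeff.support,
          (eqv n Q).coeff u * (eqv n (Lc n τ X D 1 j (mon n (FreeMonoid.toList u)))).coeff
            (FreeMonoid.ofList v)
          = if u = FreeMonoid.ofList (j :: v) then (eqv n Q).coeff u else 0 := by
        intro u hu
        rw [Lc_mon_coeff n τ X D j (hD j) v (FreeMonoid.toList u) 1
          (by simpa [List.length_cons] using hQ u hu), hone]
        by_cases h : FreeMonoid.toList u = j :: v
        · rw [if_pos h, if_pos (by rw [← FreeMonoid.ofList_toList u, h]), mul_one]
        · rw [if_neg h, if_neg (by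
            intro he
            apply h
            rw [he]
            rfl), mul_zero]
      rw [Finset.sum_congr rfl step, Finset.sum_ite_eq' ((eqv n Q).coeff.support)]
      by_cases hmem : FreeMonoid.ofList (j :: v) ∈ (eqv n Q).coeff.support
      · rw [if_pos hmem]
      · rw [if_neg hmem]
        exact (Finsupp.notMem_support_iff.1 hmem).symm
    rw [ih (Delta n τ X D j Q) hA, hB]

end Stmt6Aux

/-- if `P` has total degree `d ≥ 1` (every word in the support of `P`
has length `≤ d`) and `a · Z_{i_1} ⋯ Z_{i_d}` is a highest-degree monomial of `P`
(encoded by the word `w = [i_1, …, i_d]`, with coefficient `a ≠ 0`), then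
`Δ_{i_d} ⋯ Δ_{i_1} P = a` as a constant polynomial, where
`Δ_j = ((τ ∘ ev_X) ⊗ id) ∘ ∂_j` and `τ(1) = 1`. -/
theorem stmt6 (n : ℕ) (τ : (H →L[ℂ] H) →ₗ[ℂ] ℂ) (hone : τ 1 = 1)
    (X : Fin n → (H →L[ℂ] H))
    (D : ∀ _ : Fin n,
      FreeAlgebra ℂ (Fin n) →ₗ[ℂ] FreeAlgebra ℂ (Fin n) ⊗[ℂ] FreeAlgebra ℂ (Fin n))
    (hD : ∀ j, IsNCDerivative n j (D j))
    (P : FreeAlgebra ℂ (Fin n)) (d : ℕ) (hd : 1 ≤ d)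
    (hdeg : ∀ u ∈ (FreeAlgebra.equivMonoidAlgebraFreeMonoid P).coeff.support,
      (FreeMonoid.toList u).length ≤ d)
    (w : List (Fin n)) (hw : w.length = d)
    (ha : (FreeAlgebra.equivMonoidAlgebraFreeMonoid P).coeff (FreeMonoid.ofList w) ≠ 0) :
    w.foldl (fun Q j => Delta n τ X D j Q) P =
      algebraMap ℂ (FreeAlgebra ℂ (Fin n))
        ((FreeAlgebra.equivMonoidAlgebraFreeMonoid P).coeff (FreeMonoid.ofList w)) := by
  exact Stmt6Aux.main n τ X D hone hD w P (by rw [hw]; exact hdeg)
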